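/- arXiv:1812.11405 — 3 statements merged into one kernel-verified Lean document; each statement's English description precedes it below -/
import Mathlib

section
/- Let x, x̲, x̄ : ℝ₊ → ℝⁿ be differentiable functions with x̲ᵢ(0) ≤ xᵢ(0) ≤ x̄ᵢ(0) for all i. Suppose for each i and time t: whenever x̲ᵢ(t) = xᵢ(t) and x̲ⱼ(t) ≤ xⱼ(t) ≤ x̄ⱼ(t) for all j, we have x̲ᵢ'(t) < xᵢ'(t); and whenever x̄ᵢ(t) = xᵢ(t) and x̲ⱼ(t) ≤ xⱼ(t) ≤ x̄ⱼ(t) for all j, we have xᵢ'(t) < x̄ᵢ'(t). Then x̲ᵢ(t) ≤ xᵢ(t) ≤ x̄ᵢ(t) for all t ≥ 0 and all i. -/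
open Filter Topology Set

theorem stmt_8 {n : ℕ} (x lo hi x' lo' hi' : Fin n → ℝ → ℝ)
    (hx : ∀ i t, HasDerivAt (x i) (x' i t) t)
    (hlo : ∀ i t, HasDerivAt (lo i) (lo' i t) t)
    (hhi : ∀ i t, HasDerivAt (hi i) (hi' i t) t)
    (h0 : ∀ i, lo i 0 ≤ x i 0 ∧ x i 0 ≤ hi i 0)
    (hfaceLo : ∀ i t, 0 ≤ t → lo i t = x i t →
      (∀ j, lo j t ≤ x j t ∧ x j t ≤ hi j t) → lo' i t < x' i t)
    (hfaceHi : ∀ i t, 0 ≤ t → hi i t = x i t →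
      (∀ j, lo j t ≤ x j t ∧ x j t ≤ hi j t) → x' i t < hi' i t) :
    ∀ i t, 0 ≤ t → lo i t ≤ x i t ∧ x i t ≤ hi i t := by
  by_contra hcon
  push_neg at hcon
  set A : Set ℝ := {t | 0 ≤ t ∧ ∃ j, x j t < lo j t ∨ hi j t < x j t} with hAdef
  have hAne : A.Nonempty := by
    obtain ⟨i, t, ht0, hbad⟩ := hcon
    by_cases h1 : lo i t ≤ x i t
    · exact ⟨t, ht0, i, Or.inr (hbad h1)⟩
    · exact ⟨t, ht0, i, Or.inl (lt_of_not_ge h1)⟩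
  have hAbdd : BddBelow A := ⟨0, fun a ha => ha.1⟩
  set T := sInf A with hTdef
  have hT0 : 0 ≤ T := le_csInf hAne fun a ha => ha.1
  have hgood_lt : ∀ s, 0 ≤ s → s < T → ∀ j, lo j s ≤ x j s ∧ x j s ≤ hi j s := by
    intro s hs0 hsT j
    by_contra hbad
    rw [not_and_or, not_le, not_le] at hbad
    exact absurd (csInf_le hAbdd ⟨hs0, j, hbad⟩) (not_le.2 hsT)
  have hgoodT : ∀ j, lo j T ≤ x j T ∧ x j T ≤ hi j T := by
    rcases eq_or_lt_of_le hT0 with h | h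
    · intro j; exact h ▸ h0 j
    · intro j
      have hmem : Ioo 0 T ∈ 𝓝[<] T := Ioo_mem_nhdsLT_of_mem ⟨h, le_refl T⟩
      constructor
      · have h1 : Tendsto (fun s => x j s - lo j s) (𝓝[<] T) (𝓝 (x j T - lo j T)) :=
          ((hx j T).sub (hlo j T)).continuousAt.continuousWithinAt
        have h2 : ∀ᶠ s in 𝓝[<] T, 0 ≤ x j s - lo j s :=
          eventually_of_mem hmem fun s hs => sub_nonneg.2 (hgood_lt s hs.1.le hs.2 j).1
        have := ge_of_tendsto h1 h2
        linarith
      · have h1 : Tendsto (fun s => hi j s - x j s) (𝓝[<] T) (𝓝 (hi j T - x j T)) :=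
          ((hhi j T).sub (hx j T)).continuousAt.continuousWithinAt
        have h2 : ∀ᶠ s in 𝓝[<] T, 0 ≤ hi j s - x j s :=
          eventually_of_mem hmem fun s hs => sub_nonneg.2 (hgood_lt s hs.1.le hs.2 j).2
        have := ge_of_tendsto h1 h2
        linarith
  have key : ∀ (f : ℝ → ℝ) (d : ℝ), HasDerivAt f d T →
      (0 < f T ∨ (f T = 0 ∧ 0 < d)) → ∀ᶠ s in 𝓝[>] T, 0 < f s := by
    intro f d hf hcase
    rcases hcase with hpos | ⟨hz, hd⟩
    · have := hf.continuousAt.eventually (eventually_gt_nhds hpos)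
      exact this.filter_mono nhdsWithin_le_nhds
    · have hslope := hasDerivAt_iff_tendsto_slope.1 hf
      have h1 : Tendsto (slope f T) (𝓝[>] T) (𝓝 d) :=
        hslope.mono_left (nhdsWithin_mono _ fun s hs => ne_of_gt hs)
      have h2 : ∀ᶠ s in 𝓝[>] T, 0 < slope f T s := h1.eventually (eventually_gt_nhds hd)
      filter_upwards [h2, self_mem_nhdsWithin] with s hs hsT
      rw [slope_def_field, div_pos_iff] at hs
      rcases hs with ⟨hnum, _⟩ | ⟨_, hden⟩
      · linarith
      · exact absurd (sub_pos.2 (show T < s from hsT)) (not_lt.2 hden.le)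
  have hev : ∀ j, ∀ᶠ s in 𝓝[>] T, lo j s < x j s ∧ x j s < hi j s := by
    intro j
    have e1 : ∀ᶠ s in 𝓝[>] T, 0 < x j s - lo j s := by
      apply key _ _ ((hx j T).sub (hlo j T))
      rcases (hgoodT j).1.eq_or_lt with heq | hlt
      · exact Or.inr ⟨by rw [Pi.sub_apply, heq]; ring, sub_pos.2 (hfaceLo j T hT0 heq hgoodT)⟩
      · exact Or.inl (sub_pos.2 hlt)
    have e2 : ∀ᶠ s in 𝓝[>] T, 0 < hi j s - x j s := by
      apply key _ _ ((hhi j T).sub (hx j T))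
      rcases (hgoodT j).2.eq_or_lt with heq | hlt
      · exact Or.inr ⟨by rw [Pi.sub_apply, heq]; ring, sub_pos.2 (hfaceHi j T hT0 heq.symm hgoodT)⟩
      · exact Or.inl (sub_pos.2 hlt)
    filter_upwards [e1, e2] with s h1 h2
    exact ⟨sub_pos.1 h1, sub_pos.1 h2⟩
  have hall : ∀ᶠ s in 𝓝[>] T, ∀ j, lo j s < x j s ∧ x j s < hi j s := eventually_all.2 hev
  have hTnotA : T ∉ A := by
    rintro ⟨_, j, hj | hj⟩
    · exact absurd (hgoodT j).1 (not_le.2 hj)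
    · exact absurd (hgoodT j).2 (not_le.2 hj)
  have hfreq : ∃ᶠ s in 𝓝[>] T, s ∈ A := by
    rw [frequently_iff]
    intro U hU
    obtain ⟨u, hu, hsub⟩ := mem_nhdsGT_iff_exists_Ioo_subset.1 hU
    obtain ⟨a, haA, halt⟩ := exists_lt_of_csInf_lt hAne (show sInf A < u from hu)
    have hTa : T < a :=
      lt_of_le_of_ne (csInf_le hAbdd haA) (fun h => hTnotA (h ▸ haA))
    exact ⟨a, hsub ⟨hTa, halt⟩, haA⟩
  obtain ⟨a, haA, hga⟩ := (hfreq.and_eventually hall).exists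
  obtain ⟨ha0, j, hj | hj⟩ := haA
  · linarith [(hga j).1]
  · linarith [(hga j).2]
end

section
/- If P⁺, P⁻ : ℝ₊ⁿ → ℝ₊ are sums of monomials with nonnegative coefficients and x ∈ ℝ₊ⁿ, then both the one-term tropicalization Dom(P⁺)(x) − Dom(P⁻)(x) (when dominant monomials exist with separation ε) and the true value P⁺(x) − P⁻(x) lie in the interval [F↓(x), F↑(x)] where F↓ = M_k⁺ − (1+(n−1)ε)M_l⁻ and F↑ = (1+(p−1)ε)M_k⁺ − M_l⁻. -/
lemma aux_sum_bounds {c : ℕ} (M : Fin c → ℝ) (k : Fin c) (ε : ℝ)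
    (hM : ∀ j, 0 ≤ M j) (hε0 : 0 ≤ ε)
    (hdom : ∀ j, j ≠ k → ε * M k ≥ M j) :
    M k ≤ (∑ j, M j) ∧ (∑ j, M j) ≤ (1 + ((c : ℝ) - 1) * ε) * M k := by
  constructor
  · exact Finset.single_le_sum (fun j _ => hM j) (Finset.mem_univ k)
  · have h1 : (∑ j, M j) = M k + ∑ j ∈ Finset.univ.erase k, M j := by
      rw [← Finset.sum_erase_add _ _ (Finset.mem_univ k)]; ring
    have h2 : ∑ j ∈ Finset.univ.erase k, M j ≤ ∑ _j ∈ Finset.univ.erase k, ε * M k :=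
      Finset.sum_le_sum (fun j hj => hdom j (Finset.mem_erase.1 hj).1)
    have h3 : (Finset.univ.erase k).card = c - 1 := by
      simp [Finset.card_erase_of_mem]
    have hc : 1 ≤ c := k.pos
    have h4 : ((c : ℝ) - 1) = ((c - 1 : ℕ) : ℝ) := by
      push_cast [hc]; ring
    rw [h1]
    calc M k + ∑ j ∈ Finset.univ.erase k, M j
        ≤ M k + ((c - 1 : ℕ) : ℝ) * (ε * M k) := by
          rw [Finset.sum_const, h3, nsmul_eq_mul] at h2; linarith
      _ = (1 + ((c : ℝ) - 1) * ε) * M k := by rw [h4]; ring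

theorem stmt_13 {p n : ℕ} (Mp : Fin p → ℝ) (Mm : Fin n → ℝ) (k : Fin p) (l : Fin n)
    (ε : ℝ) (hMp : ∀ j, 0 ≤ Mp j) (hMm : ∀ m, 0 ≤ Mm m)
    (hε0 : 0 ≤ ε) (hε1 : ε ≤ 1)
    (hdomp : ∀ j, j ≠ k → ε * Mp k ≥ Mp j)
    (hdomm : ∀ m, m ≠ l → ε * Mm l ≥ Mm m) :
    (Mp k - (1 + ((n : ℝ) - 1) * ε) * Mm l ≤ Mp k - Mm l ∧
        Mp k - Mm l ≤ (1 + ((p : ℝ) - 1) * ε) * Mp k - Mm l) ∧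
      (Mp k - (1 + ((n : ℝ) - 1) * ε) * Mm l ≤ (∑ j, Mp j) - (∑ m, Mm m) ∧
        (∑ j, Mp j) - (∑ m, Mm m) ≤ (1 + ((p : ℝ) - 1) * ε) * Mp k - Mm l) := by
  obtain ⟨hp1, hp2⟩ := aux_sum_bounds Mp k ε hMp hε0 hdomp
  obtain ⟨hm1, hm2⟩ := aux_sum_bounds Mm l ε hMm hε0 hdomm
  have hMk := hMp k
  have hMl := hMm l
  have hn' : (1:ℝ) ≤ (n:ℝ) := by exact_mod_cast l.pos
  have hp' : (1:ℝ) ≤ (p:ℝ) := by exact_mod_cast k.pos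
  refine ⟨⟨by nlinarith, by nlinarith⟩, ⟨by linarith, by linarith⟩⟩
end

section
/- Let F, F̲, F̄ : ℝⁿ → ℝ with F̲(y) ≤ F(y) ≤ F̄(y) for all y, where F̲ is nonincreasing and F̄ nondecreasing in each coordinate other than the i-th (in the appropriate polarity). If x solves x' = F(x) and the box bounds solve x̲ᵢ' = F̲ evaluated with each occurrence of xⱼ (j ≠ i) replaced by x̲ⱼ or x̄ⱼ according to its sign of occurrence, then the face-evaluated derivative of the lower bound is ≤ the derivative of x on the face {xᵢ = x̲ᵢ, x̲ⱼ ≤ xⱼ ≤ x̄ⱼ}. -/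
theorem stmt_17 {n : ℕ} (i : Fin n) (F Flo : (Fin n → ℝ) → ℝ)
    (σ : Fin n → Bool)
    (hle : ∀ y, Flo y ≤ F y)
    (hmono : ∀ y z : Fin n → ℝ, y i = z i →
      (∀ j, j ≠ i → (σ j = true → z j ≤ y j) ∧ (σ j = false → y j ≤ z j)) →
      Flo z ≤ Flo y)
    (lo hi : Fin n → ℝ) (x : ℝ → (Fin n → ℝ)) (x' : ℝ → (Fin n → ℝ))
    (hx : ∀ j t, HasDerivAt (fun s => x s j) (x' t j) t)
    (hxF : ∀ t, x' t i = F (x t))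
    (t : ℝ)
    (hface : x t i = lo i) (hbox : ∀ j, lo j ≤ x t j ∧ x t j ≤ hi j) :
    Flo (fun j => if j = i then lo i else if σ j then lo j else hi j) ≤ x' t i := by
  rw [hxF]
  refine le_trans (hmono (x t) _ (by simp [hface]) ?_) (hle _)
  intro j hj
  simp only [if_neg hj]
  constructor
  · intro h; simp [h, (hbox j).1]
  · intro h; simp [h, (hbox j).2]
end
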